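/- ∑_{k=1}^∞ (1/12)^k / C(3k,k) = 1/80 + (183√15/3200)·arctan((√15 − √12)/3) − (9/256)·log(3/2). -/

import Mathlib

open MeasureTheory intervalIntegral Real

lemma betaNat (b a : ℕ) :
    ∫ t in (0:ℝ)..1, t^a * (1-t)^b = (a.factorial * b.factorial : ℝ)/(a+b+1).factorial := by
  induction b generalizing a with
  | zero =>
    simp only [pow_zero, mul_one, integral_pow, Nat.factorial_zero, Nat.cast_one, one_pow]
    rw [Nat.add_zero, Nat.factorial_succ]
    push_cast
    rw [eq_div_iff (by positivity)]
    field_simp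
    simp
  | succ b ih =>
    have key := intervalIntegral.integral_mul_deriv_eq_deriv_mul
      (u := fun t : ℝ => (1-t)^(b+1)) (u' := fun t : ℝ => -((b+1) * (1-t)^b))
      (v := fun t : ℝ => t^(a+1)/(a+1)) (v' := fun t : ℝ => t^a)
      (a := (0:ℝ)) (b := 1)
      (fun x _ => by
        have h : HasDerivAt (fun t : ℝ => (1-t)^(b+1)) (((b+1) * (1-x)^b) * (-1)) x := by
          exact (HasDerivAt.fun_pow ((hasDerivAt_const x (1:ℝ)).fun_sub (hasDerivAt_id x)) (b+1)).congr_deriv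
            (by simp only [id_eq]; push_cast; ring)
        exact h.congr_deriv (by ring))
      (fun x _ => by
        have h : HasDerivAt (fun t : ℝ => t^(a+1)/(a+1)) ((((a:ℝ)+1) * x^a) / (a+1)) x := by
          exact (hasDerivAt_pow (a+1) x).div_const _ |>.congr_deriv (by push_cast; ring)
        exact h.congr_deriv (by field_simp))
      (by apply Continuous.intervalIntegrable; continuity)
      (by apply Continuous.intervalIntegrable; continuity)
    -- key : ∫ u*v' = u 1 * v 1 - u 0 * v 0 - ∫ u' * v
    have h2 : ∫ t in (0:ℝ)..1, t^a * (1-t)^(b+1)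
        = ((b:ℝ)+1)/((a:ℝ)+1) * ∫ t in (0:ℝ)..1, t^(a+1) * (1-t)^b := by
      rw [show (∫ t in (0:ℝ)..1, t^a * (1-t)^(b+1)) = ∫ t in (0:ℝ)..1, (1-t)^(b+1) * t^a by
        congr 1; ext t; ring, key]
      rw [show (∫ t in (0:ℝ)..1, -(((b:ℝ)+1) * (1-t)^b) * (t^(a+1)/(a+1)))
          = ∫ t in (0:ℝ)..1, (-(((b:ℝ)+1)/((a:ℝ)+1))) * (t^(a+1) * (1-t)^b) by
        congr 1; ext t; field_simp]
      rw [intervalIntegral.integral_const_mul]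
      norm_num
    rw [h2, ih (a+1)]
    have fa : ((a+1).factorial : ℝ) = (a+1) * a.factorial := by
      rw [Nat.factorial_succ]; push_cast; ring
    have fb : ((b+1).factorial : ℝ) = (b+1) * b.factorial := by
      rw [Nat.factorial_succ]; push_cast; ring
    have : (a+1+b+1) = (a + (b+1) + 1) := by omega
    rw [this] at *
    rw [fa, fb]
    have h3 : (0:ℝ) < (a + (b+1) + 1).factorial := by positivity
    field_simp

lemma sqrt15_eq : Real.sqrt 15 = Real.sqrt 3 * Real.sqrt 5 := by
  rw [show (15:ℝ) = 3*5 by norm_num, Real.sqrt_mul (by norm_num)]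

lemma sqrt12_eq : Real.sqrt 12 = 2 * Real.sqrt 3 := by
  rw [show (12:ℝ) = 2^2*3 by norm_num, Real.sqrt_mul (by positivity), Real.sqrt_sq (by norm_num)]

lemma arctan_triple : Real.arctan (Real.sqrt 15/9) = 3 * Real.arctan ((Real.sqrt 15 - Real.sqrt 12)/3) := by
  have a2 : Real.sqrt 3 ^ 2 = 3 := Real.sq_sqrt (by norm_num)
  have b2 : Real.sqrt 5 ^ 2 = 5 := Real.sq_sqrt (by norm_num)
  have ha : (1.7:ℝ) < Real.sqrt 3 := by nlinarith [Real.sqrt_nonneg 3, a2]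
  have hb : (2.2:ℝ) < Real.sqrt 5 := by nlinarith [Real.sqrt_nonneg 5, b2]
  have hb' : Real.sqrt 5 < 2.3 := by nlinarith [Real.sqrt_nonneg 5, b2]
  set a := Real.sqrt 3 with hadef
  set b := Real.sqrt 5 with hbdef
  have hw : (Real.sqrt 15 - Real.sqrt 12)/3 = a*(b-2)/3 := by
    rw [sqrt15_eq, sqrt12_eq]; ring
  rw [hw, sqrt15_eq]
  have h2b3 : (2*b-3) ≠ 0 := ne_of_gt (by linarith)
  have hG1 : (a*(b-2)/3) * (a*(b-2)/3) = (9-4*b)/3 := by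
    linear_combination ((b-2)^2/9)*a2 + (1/3)*b2
  have hw1 : (a*(b-2)/3) * (a*(b-2)/3) < 1 := by rw [hG1]; linarith
  have h1mw : 1 - (a*(b-2)/3)*(a*(b-2)/3) ≠ 0 := by rw [hG1]; intro h; nlinarith
  have h1 : arctan (a*(b-2)/3) + arctan (a*(b-2)/3)
      = arctan ((a*(b-2)/3 + a*(b-2)/3)/(1-(a*(b-2)/3)*(a*(b-2)/3))) := arctan_add hw1
  have hww : (a*(b-2)/3 + a*(b-2)/3)/(1-(a*(b-2)/3)*(a*(b-2)/3)) = a*(b-2)/(2*b-3) := by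
    rw [div_eq_div_iff h1mw h2b3]
    linear_combination (a*(b-2)^3/9)*a2 + (a*(b-2)/3)*b2
  have hG3 : (a*(b-2)/(2*b-3)) * (a*(b-2)/3) = (9-4*b)/(2*b-3) := by
    rw [div_mul_div_comm, div_eq_div_iff (by intro hc; apply h2b3; nlinarith) h2b3]
    linear_combination ((b-2)^2*(2*b-3))*a2 + (3*(2*b-3))*b2
  have hw2 : (a*(b-2)/(2*b-3)) * (a*(b-2)/3) < 1 := by
    rw [hG3, div_lt_one (by linarith)]; linarith
  have h2 : arctan (a*(b-2)/(2*b-3)) + arctan (a*(b-2)/3)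
      = arctan ((a*(b-2)/(2*b-3) + a*(b-2)/3)/(1 - (a*(b-2)/(2*b-3))*(a*(b-2)/3))) :=
    arctan_add hw2
  have h1mvw : 1 - (a*(b-2)/(2*b-3))*(a*(b-2)/3) = (6*b-12)/(2*b-3) := by
    rw [hG3, eq_div_iff h2b3, sub_mul, div_mul_cancel₀ _ h2b3]; ring
  have hfin : (a*(b-2)/(2*b-3) + a*(b-2)/3)/(1 - (a*(b-2)/(2*b-3))*(a*(b-2)/3)) = a*b/9 := by
    have h6 : (6*b-12) ≠ 0 := ne_of_gt (by linarith)
    have hD : (6*b-12)/(2*b-3) ≠ 0 := div_ne_zero h6 h2b3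
    rw [h1mvw, div_eq_div_iff hD (by norm_num : (9:ℝ) ≠ 0)]
    linear_combination (-3*a*(b-2))*(mul_inv_cancel₀ h2b3)
  rw [hfin] at h2
  rw [hww] at h1
  linarith [h1, h2]

noncomputable def Hanti (t : ℝ) : ℝ :=
  (3/128)*Real.log (3-t) + (27/16)*(3-t)⁻¹ - (3/256)*Real.log (t^2+t+4)
  + (153*t-396)/(80*(t^2+t+4)) - t + (61*Real.sqrt 15/3200)*Real.arctan (t*Real.sqrt 15/(t+8))

noncomputable def Gfun (t : ℝ) : ℝ :=
  3*(t*(1-t)^2/12)/(1-t*(1-t)^2/12)^2 + (t*(1-t)^2/12)/(1-t*(1-t)^2/12)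

lemma hanti_deriv {t : ℝ} (h0 : 0 ≤ t) (h1 : t ≤ 1) : HasDerivAt Hanti (Gfun t) t := by
  have h3 : (3:ℝ) - t > 0 := by linarith
  have h3ne : (3:ℝ) - t ≠ 0 := ne_of_gt h3
  have hq : t^2+t+4 > 0 := by nlinarith
  have hqne : t^2+t+4 ≠ 0 := ne_of_gt hq
  have hqne' : 80*(t^2+t+4) ≠ 0 := by positivity
  have ht8 : t+8 ≠ 0 := by positivity
  have s15 : Real.sqrt 15 ^ 2 = 15 := Real.sq_sqrt (by norm_num)
  have h3t : HasDerivAt (fun t:ℝ => 3-t) (-1) t := by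
    simpa using (hasDerivAt_id t).const_sub (3:ℝ)
  have hqd : HasDerivAt (fun t:ℝ => t^2+t+4) (2*t+1) t := by
    have := ((hasDerivAt_pow 2 t).add (hasDerivAt_id t)).add_const (4:ℝ)
    simpa using this.congr_deriv (by push_cast; ring)
  have hA : HasDerivAt (fun t:ℝ => (3/128)*Real.log (3-t)) ((3/128)*((-1)/(3-t))) t :=
    (h3t.log h3ne).const_mul _
  have hB : HasDerivAt (fun t:ℝ => (27/16)*(3-t)⁻¹) ((27/16)*(-(-1)/(3-t)^2)) t :=
    (h3t.inv h3ne).const_mul _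
  have hC : HasDerivAt (fun t:ℝ => (3/256)*Real.log (t^2+t+4)) ((3/256)*((2*t+1)/(t^2+t+4))) t :=
    (hqd.log hqne).const_mul _
  have hDden : HasDerivAt (fun t:ℝ => 80*(t^2+t+4)) (80*(2*t+1)) t := hqd.const_mul _
  have hDnum : HasDerivAt (fun t:ℝ => 153*t-396) 153 t := by
    simpa using ((hasDerivAt_id t).const_mul (153:ℝ)).sub_const (396:ℝ)
  have hD : HasDerivAt (fun t:ℝ => (153*t-396)/(80*(t^2+t+4)))
      ((153*(80*(t^2+t+4)) - (153*t-396)*(80*(2*t+1)))/(80*(t^2+t+4))^2) t :=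
    hDnum.div hDden hqne'
  have hpsi : HasDerivAt (fun t:ℝ => t*Real.sqrt 15/(t+8))
      ((1*Real.sqrt 15*(t+8) - t*Real.sqrt 15*1)/(t+8)^2) t :=
    ((hasDerivAt_id t).mul_const _).div ((hasDerivAt_id t).add_const 8) ht8
  have hF : HasDerivAt (fun t:ℝ => (61*Real.sqrt 15/3200)*Real.arctan (t*Real.sqrt 15/(t+8)))
      ((61*Real.sqrt 15/3200)*(1/(1+(t*Real.sqrt 15/(t+8))^2) *
        ((1*Real.sqrt 15*(t+8) - t*Real.sqrt 15*1)/(t+8)^2))) t :=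
    hpsi.arctan.const_mul _
  have hFd : (61*Real.sqrt 15/3200)*(1/(1+(t*Real.sqrt 15/(t+8))^2) *
        ((1*Real.sqrt 15*(t+8) - t*Real.sqrt 15*1)/(t+8)^2)) = 183/(1280*(t^2+t+4)) := by
    have hden : 1+(t*Real.sqrt 15/(t+8))^2 > 0 := by positivity
    field_simp
    ring_nf
    simp only [s15]
    ring
  rw [hFd] at hF
  have total := ((((hA.add hB).sub hC).add hD).sub (hasDerivAt_id t)).add hF
  have : Hanti = fun t => ((((( (3/128)*Real.log (3-t) + (27/16)*(3-t)⁻¹) - (3/256)*Real.log (t^2+t+4))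
      + (153*t-396)/(80*(t^2+t+4))) - t) + (61*Real.sqrt 15/3200)*Real.arctan (t*Real.sqrt 15/(t+8))) := by
    rfl
  rw [this]
  refine total.congr_deriv ?_
  symm
  have hu : (1 - t*(1-t)^2/12) = (3-t)*(t^2+t+4)/12 := by ring
  simp only [Gfun, hu, id_eq]
  field_simp
  ring

lemma Gcont : ContinuousOn Gfun (Set.uIcc (0:ℝ) 1) := by
  have hden : ∀ t ∈ Set.uIcc (0:ℝ) 1, (1 - t*(1-t)^2/12) ≠ 0 := by
    intro t ht
    rw [Set.uIcc_of_le zero_le_one] at ht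
    obtain ⟨h0, h1⟩ := ht
    have : (1 - t*(1-t)^2/12) = (3-t)*(t^2+t+4)/12 := by ring
    rw [this]
    have : (3-t) > 0 := by linarith
    have : t^2+t+4 > 0 := by nlinarith
    positivity
  apply ContinuousOn.add
  · exact ContinuousOn.div (by fun_prop) (by fun_prop)
      (fun t ht => pow_ne_zero 2 (hden t ht))
  · exact ContinuousOn.div (by fun_prop) (by fun_prop) hden

lemma Gint : ∫ t in (0:ℝ)..1, Gfun t =
    1/80 + (183*Real.sqrt 15/3200)*Real.arctan ((Real.sqrt 15 - Real.sqrt 12)/3)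
      - (9/256)*Real.log (3/2) := by
  have hderiv : ∀ t ∈ Set.uIcc (0:ℝ) 1, HasDerivAt Hanti (Gfun t) t := by
    intro t ht
    rw [Set.uIcc_of_le zero_le_one] at ht
    exact hanti_deriv ht.1 ht.2
  rw [intervalIntegral.integral_eq_sub_of_hasDerivAt hderiv Gcont.intervalIntegrable]
  have l6 : Real.log 6 = Real.log 2 + Real.log 3 := by
    rw [show (6:ℝ) = 2*3 by norm_num, Real.log_mul (by norm_num) (by norm_num)]
  have l4 : Real.log 4 = 2 * Real.log 2 := by
    rw [show (4:ℝ) = 2^2 by norm_num, Real.log_pow]; push_cast; ring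
  have l32 : Real.log (3/2) = Real.log 3 - Real.log 2 := Real.log_div (by norm_num) (by norm_num)
  simp only [Hanti]
  norm_num
  rw [arctan_triple, l6, l4, l32]
  ring


lemma term_eq (n : ℕ) :
    (1/12:ℝ)^n / ((3*n).choose n : ℝ) = ∫ t in (0:ℝ)..1, (3*(n:ℝ)+1) * (t*(1-t)^2/12)^n := by
  have h1 : ∀ t : ℝ, (3*(n:ℝ)+1) * (t*(1-t)^2/12)^n
      = ((3*(n:ℝ)+1) * (1/12)^n) * (t^n * (1-t)^(2*n)) := by
    intro t
    rw [div_pow, mul_pow, ← pow_mul]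
    simp only [one_div, inv_pow]; ring
  simp_rw [h1]
  rw [intervalIntegral.integral_const_mul, betaNat]
  have hC := Nat.choose_mul_factorial_mul_factorial (show n ≤ 3*n by omega)
  rw [show 3*n-n = 2*n by omega] at hC
  have hCr : (((3*n).choose n : ℕ) : ℝ) * (n.factorial : ℝ) * ((2*n).factorial : ℝ)
      = ((3*n).factorial : ℝ) := by exact_mod_cast congrArg (Nat.cast (R := ℝ)) hC
  have hfact : ((n + 2*n + 1).factorial : ℝ) = (3*(n:ℝ)+1) * ((3*n).factorial : ℝ) := by
    rw [show n + 2*n + 1 = (3*n)+1 by omega, Nat.factorial_succ]; push_cast; ring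
  have hcpos : (0:ℝ) < (((3*n).choose n : ℕ) : ℝ) := by
    exact_mod_cast Nat.choose_pos (show n ≤ 3*n by omega)
  have hf1 : (0:ℝ) < (n.factorial : ℝ) := by exact_mod_cast n.factorial_pos
  have hf2 : (0:ℝ) < ((2*n).factorial : ℝ) := by exact_mod_cast (2*n).factorial_pos
  have hf3 : (0:ℝ) < ((n+2*n+1).factorial : ℝ) := by exact_mod_cast (n+2*n+1).factorial_pos
  rw [div_eq_iff (ne_of_gt hcpos)]
  rw [hfact] at hf3 ⊢
  field_simp
  nlinarith [hCr, hf1, hf2, hf3, pow_pos (show (0:ℝ) < 1/12 by norm_num) n]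

lemma tsum_eval {u : ℝ} (h0 : 0 ≤ u) (h1 : u < 1) :
    ∑' k : ℕ, (3*(k:ℝ)+4) * u^(k+1) = 3*u/(1-u)^2 + u/(1-u) := by
  have hn : ‖u‖ < 1 := by rwa [Real.norm_eq_abs, abs_of_nonneg h0]
  have hs1 : Summable (fun n : ℕ => (n:ℝ) * u^n) := by
    have := summable_pow_mul_geometric_of_norm_lt_one 1 hn
    simpa using this
  have hg : Summable (fun n : ℕ => u^n) := summable_geometric_of_lt_one h0 h1
  have hs1' : Summable (fun k : ℕ => ((k:ℝ)+1) * u^(k+1)) := by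
    have := (summable_nat_add_iff 1).2 hs1
    simpa using this
  have hg' : Summable (fun k : ℕ => u^(k+1)) := by
    have := (summable_nat_add_iff 1).2 hg
    simpa using this
  have hne : (1:ℝ) - u ≠ 0 := by intro hc; linarith
  have t1 : ∑' k : ℕ, ((k:ℝ)+1) * u^(k+1) = u/(1-u)^2 := by
    have h := Summable.tsum_eq_zero_add hs1
    rw [tsum_coe_mul_geometric_of_norm_lt_one hn] at h
    push_cast at h
    simpa using h.symm
  have t2 : ∑' k : ℕ, u^(k+1) = u/(1-u) := by
    have h := Summable.tsum_eq_zero_add hg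
    rw [tsum_geometric_of_lt_one h0 h1] at h
    simp only [pow_zero] at h
    have : ∑' k : ℕ, u^(k+1) = (1-u)⁻¹ - 1 := by linarith
    rw [this]
    field_simp
    ring
  have step : ∑' k : ℕ, (3*(k:ℝ)+4) * u^(k+1)
      = ∑' k : ℕ, (3*(((k:ℝ)+1) * u^(k+1)) + u^(k+1)) := tsum_congr (fun k => by ring)
  rw [step, Summable.tsum_add (hs1'.mul_left 3) hg', tsum_mul_left, t1, t2]
  ring

noncomputable def Fser (k : ℕ) (t : ℝ) : ℝ := (3*(k:ℝ)+4) * (t*(1-t)^2/12)^(k+1)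

theorem stmt_19 :
    ∑' k : ℕ, (1/12 : ℝ)^(k+1) / ((((3*(k+1)).choose (k+1) : ℕ)) : ℝ) =
    1/80 + (183*Real.sqrt 15/3200)*Real.arctan ((Real.sqrt 15 - Real.sqrt 12)/3) - (9/256)*Real.log (3/2) := by
  have hFcont : ∀ k : ℕ, Continuous (Fser k) := by
    intro k; unfold Fser; fun_prop
  have hterm : ∀ k : ℕ, (1/12:ℝ)^(k+1) / (((3*(k+1)).choose (k+1) : ℕ) : ℝ)
      = ∫ t in Set.Ioc (0:ℝ) 1, Fser k t ∂volume := by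
    intro k
    rw [← intervalIntegral.integral_of_le zero_le_one]
    have h := term_eq (k+1)
    push_cast at h
    rw [h]
    apply intervalIntegral.integral_congr
    intro t _
    unfold Fser
    push_cast
    ring_nf
  have hint : ∀ k : ℕ, Integrable (Fser k) (volume.restrict (Set.Ioc (0:ℝ) 1)) := by
    intro k
    exact (hFcont k).integrableOn_Ioc
  have hbound : ∀ k : ℕ, ∀ t ∈ Set.Ioc (0:ℝ) 1, ‖Fser k t‖ ≤ (3*(k:ℝ)+4)*(1/12)^(k+1) := by
    intro k t ht
    obtain ⟨h0, h1⟩ := ht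
    have hu0 : 0 ≤ t*(1-t)^2/12 := by positivity
    have hu1 : t*(1-t)^2/12 ≤ 1/12 := by nlinarith [sq_nonneg (1-t), sq_nonneg t]
    rw [Real.norm_eq_abs, abs_of_nonneg (by unfold Fser; positivity)]
    unfold Fser
    have := pow_le_pow_left₀ hu0 hu1 (k+1)
    have hk : (0:ℝ) ≤ 3*(k:ℝ)+4 := by positivity
    nlinarith [pow_nonneg hu0 (k+1)]
  have hmaj : Summable (fun k : ℕ => (3*(k:ℝ)+4)*(1/12)^(k+1)) := by
    have hs : Summable (fun n : ℕ => (n:ℝ) * (1/12)^n) := by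
      have := summable_pow_mul_geometric_of_norm_lt_one (R := ℝ) 1 (r := 1/12) (by norm_num [Real.norm_eq_abs])
      simpa using this
    have hg : Summable (fun n : ℕ => ((1:ℝ)/12)^n) := summable_geometric_of_lt_one (by norm_num) (by norm_num)
    apply Summable.congr (((hs.mul_left (1/4)).add (hg.mul_left (1/3))))
    intro k
    push_cast
    ring
  have hnorm : Summable (fun k : ℕ => ∫ t, ‖Fser k t‖ ∂(volume.restrict (Set.Ioc (0:ℝ) 1))) := by
    apply Summable.of_nonneg_of_le
      (fun k => integral_nonneg (fun t => norm_nonneg _)) _ hmaj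
    intro k
    have hle : ∫ t, ‖Fser k t‖ ∂(volume.restrict (Set.Ioc (0:ℝ) 1))
        ≤ ∫ _t, (3*(k:ℝ)+4)*(1/12)^(k+1) ∂(volume.restrict (Set.Ioc (0:ℝ) 1)) := by
      apply integral_mono_of_nonneg
      · exact Filter.Eventually.of_forall (fun t => norm_nonneg _)
      · exact integrable_const _
      · exact (MeasureTheory.ae_restrict_iff' measurableSet_Ioc).2
          (Filter.Eventually.of_forall (fun t ht => hbound k t ht))
    calc ∫ t, ‖Fser k t‖ ∂(volume.restrict (Set.Ioc (0:ℝ) 1)) ≤ _ := hle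
      _ = (3*(k:ℝ)+4)*(1/12)^(k+1) := by
          rw [MeasureTheory.integral_const]
          simp [Real.volume_Ioc]
  calc ∑' k : ℕ, (1/12 : ℝ)^(k+1) / ((((3*(k+1)).choose (k+1) : ℕ)) : ℝ)
      = ∑' k : ℕ, ∫ t in Set.Ioc (0:ℝ) 1, Fser k t ∂volume := tsum_congr hterm
    _ = ∫ t in Set.Ioc (0:ℝ) 1, (∑' k : ℕ, Fser k t) ∂volume :=
        integral_tsum_of_summable_integral_norm hint hnorm
    _ = ∫ t in Set.Ioc (0:ℝ) 1, Gfun t ∂volume := by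
        apply setIntegral_congr_fun measurableSet_Ioc
        intro t ht
        obtain ⟨h0, h1⟩ := ht
        have hu0 : 0 ≤ t*(1-t)^2/12 := by positivity
        have hu1 : t*(1-t)^2/12 < 1 := by nlinarith [sq_nonneg (1-t), sq_nonneg t]
        exact tsum_eval hu0 hu1
    _ = ∫ t in (0:ℝ)..1, Gfun t := (intervalIntegral.integral_of_le zero_le_one).symm
    _ = _ := Gint
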